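/- (Inclusion–exclusion count of set tuples with empty common intersection, equation (26)) Let L ≥ 1 and n ≥ 0 be integers and let k_1, …, k_L be integers with 0 ≤ k_j ≤ n for every j. Then the number of L-tuples (V_1, …, V_L) of subsets of Fin n with |V_j| = k_j for every j and ⋂_{j=1}^{L} V_j = ∅ equals Σ_{l=0}^{min_j k_j} (−1)^l C(n, l) ∏_{j=1}^{L} C(n−l, k_j−l), where C(a,b) denotes the binomial coefficient. -/

import Mathlib

open scoped Classical
open Finset

/-- Minimum of `k j` over the (nonempty) index type `Fin L`. -/
def minOver {L : ℕ} (hL : 0 < L) (k : Fin L → ℕ) : ℕ :=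
  Finset.univ.inf' ⟨⟨0, hL⟩, Finset.mem_univ _⟩ k

lemma card_pi_filter {n L : ℕ} (P : Fin L → Finset (Fin n) → Prop) :
    (univ.filter (fun V : Fin L → Finset (Fin n) => ∀ j, P j (V j))).card
      = ∏ j, (univ.filter (fun W => P j W)).card := by
  classical
  rw [← Fintype.card_subtype, Fintype.card_congr (Equiv.subtypePiEquivPi), Fintype.card_pi]
  simp [Fintype.card_subtype]

lemma count_supersets {n : ℕ} (S : Finset (Fin n)) (m : ℕ) (hS : S.card ≤ m) :
    (univ.filter (fun W : Finset (Fin n) => W.card = m ∧ S ⊆ W)).card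
      = (n - S.card).choose (m - S.card) := by
  classical
  have hcompl : Sᶜ.card = n - S.card := by simp [Finset.card_compl]
  rw [← hcompl, ← Finset.card_powersetCard]
  apply Finset.card_bij' (fun W _ => W \ S) (fun T _ => T ∪ S)
  · intro W hW
    simp only [mem_filter, mem_univ, true_and] at hW
    rw [Finset.mem_powersetCard]
    refine ⟨fun x hx => ?_, by rw [Finset.card_sdiff_of_subset hW.2, hW.1]⟩
    simp [Finset.mem_compl, (Finset.mem_sdiff.1 hx).2]
  · intro T hT
    rw [Finset.mem_powersetCard] at hT
    have hdisj : Disjoint T S := by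
      refine Finset.disjoint_left.2 fun x hx hxS => ?_
      have := hT.1 hx
      simp only [Finset.mem_compl] at this
      exact this hxS
    simp only [mem_filter, mem_univ, true_and]
    constructor
    · rw [Finset.card_union_of_disjoint hdisj, hT.2]
      have := Finset.card_le_univ S
      simp only [Finset.card_univ, Fintype.card_fin] at this
      omega
    · exact Finset.subset_union_right
  · intro W hW
    simp only [mem_filter, mem_univ, true_and] at hW
    exact Finset.sdiff_union_of_subset hW.2
  · intro T hT
    rw [Finset.mem_powersetCard] at hT
    apply Finset.union_sdiff_cancel_right
    refine Finset.disjoint_left.2 fun x hx hxS => ?_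
    have := hT.1 hx
    simp only [Finset.mem_compl] at this
    exact this hxS

lemma count_supersets_zero {n : ℕ} (S : Finset (Fin n)) (m : ℕ) (hS : m < S.card) :
    (univ.filter (fun W : Finset (Fin n) => W.card = m ∧ S ⊆ W)).card = 0 := by
  rw [Finset.card_eq_zero, Finset.filter_eq_empty_iff]
  rintro W - ⟨hc, hsub⟩
  have := Finset.card_le_card hsub
  omega

/-- inclusion–exclusion count of set tuples with empty common intersection:
the number of `L`-tuples `(V 1, …, V L)` of subsets of `Fin n` with `|V j| = k j` for every
`j` and `⋂ j, V j = ∅` equals `Σ_{l=0}^{min_j k_j} (-1)^l C(n,l) ∏_j C(n-l, k_j-l)`. -/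
theorem stmt9 (n L : ℕ) (hL : 0 < L) (k : Fin L → ℕ) (hk : ∀ j, k j ≤ n) :
    ((Finset.univ.filter (fun V : Fin L → Finset (Fin n) =>
          (∀ j, (V j).card = k j) ∧ Finset.univ.inf V = ∅)).card : ℤ)
      = ∑ l ∈ Finset.range (minOver hL k + 1),
          (-1 : ℤ) ^ l * (n.choose l : ℤ) * ∏ j, ((n - l).choose (k j - l) : ℤ) := by
  classical
  have hmin_le : ∀ j, minOver hL k ≤ k j := fun j => Finset.inf'_le _ (mem_univ j)
  have hle_min : ∀ l : ℕ, l ≤ minOver hL k ↔ ∀ j, l ≤ k j := by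
    intro l
    refine (Finset.le_inf'_iff (H := ⟨⟨0, hL⟩, mem_univ _⟩) (f := k)).trans ?_
    exact ⟨fun h j => h j (mem_univ j), fun h j _ => h j⟩
  have hmin_n : minOver hL k ≤ n := (hmin_le ⟨0, hL⟩).trans (hk _)
  set A := univ.filter (fun V : Fin L → Finset (Fin n) => ∀ j, (V j).card = k j) with hA
  -- Step 1: rewrite LHS as a double sum over (S, V)
  have step1 : ((Finset.univ.filter (fun V : Fin L → Finset (Fin n) =>
          (∀ j, (V j).card = k j) ∧ Finset.univ.inf V = ∅)).card : ℤ)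
      = ∑ S ∈ (univ : Finset (Fin n)).powerset,
          ∑ V ∈ A, (if S ⊆ Finset.univ.inf V then (-1 : ℤ)^S.card else 0) := by
    rw [Finset.sum_comm, ← Finset.filter_filter, ← hA, Finset.card_filter]
    push_cast
    refine Finset.sum_congr rfl fun V _ => ?_
    rw [← Finset.sum_filter]
    have hps : (univ : Finset (Fin n)).powerset.filter (· ⊆ Finset.univ.inf V)
        = (Finset.univ.inf V).powerset := by
      ext S; simp [Finset.mem_powerset]
    rw [hps, Finset.sum_powerset_neg_one_pow_card]
  -- Step 2: inner sum equals signed count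
  have step2 : ∀ S : Finset (Fin n),
      ∑ V ∈ A, (if S ⊆ Finset.univ.inf V then (-1 : ℤ)^S.card else 0)
        = (-1 : ℤ)^S.card *
            (if S.card ≤ minOver hL k
              then ∏ j, ((n - S.card).choose (k j - S.card) : ℤ) else 0) := by
    intro S
    have hcond : ∀ V : Fin L → Finset (Fin n),
        ((∀ j, (V j).card = k j) ∧ S ⊆ Finset.univ.inf V)
          ↔ ∀ j, ((V j).card = k j ∧ S ⊆ V j) := by
      intro V
      have hiff : S ⊆ Finset.univ.inf V ↔ ∀ j : Fin L, S ⊆ V j := by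
        rw [← Finset.le_iff_subset, Finset.le_inf_iff]
        simp [Finset.le_iff_subset]
      rw [hiff]
      exact ⟨fun ⟨h1, h2⟩ j => ⟨h1 j, h2 j⟩, fun h => ⟨fun j => (h j).1, fun j => (h j).2⟩⟩
    have hcount : (A.filter (fun V => S ⊆ Finset.univ.inf V)).card
        = if S.card ≤ minOver hL k
            then ∏ j, (n - S.card).choose (k j - S.card) else 0 := by
      have hfilt : A.filter (fun V => S ⊆ Finset.univ.inf V)
          = univ.filter (fun V : Fin L → Finset (Fin n) =>
              ∀ j, ((V j).card = k j ∧ S ⊆ V j)) := by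
        rw [hA, Finset.filter_filter]
        exact Finset.filter_congr fun V _ => hcond V
      have hpi : (univ.filter (fun V : Fin L → Finset (Fin n) =>
              ∀ j, ((V j).card = k j ∧ S ⊆ V j))).card
          = ∏ j, (univ.filter (fun W : Finset (Fin n) => W.card = k j ∧ S ⊆ W)).card := by
        rw [← Fintype.card_subtype, Fintype.card_congr
          (Equiv.subtypePiEquivPi (β := fun _ : Fin L => Finset (Fin n))
            (p := fun j W => W.card = k j ∧ S ⊆ W)), Fintype.card_pi]
        simp [Fintype.card_subtype]
      rw [hfilt, hpi]
      by_cases hS : S.card ≤ minOver hL k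
      · rw [if_pos hS]
        exact Finset.prod_congr rfl fun j _ =>
          count_supersets S (k j) ((hle_min _).1 hS j)
      · rw [if_neg hS]
        have : ∃ j, k j < S.card := by
          by_contra h
          push_neg at h
          exact hS ((hle_min _).2 fun j => h j)
        obtain ⟨j, hj⟩ := this
        exact Finset.prod_eq_zero (mem_univ j) (count_supersets_zero S (k j) hj)
    rw [← Finset.sum_filter, Finset.sum_const, hcount, nsmul_eq_mul]
    push_cast [apply_ite (fun m : ℕ => (m : ℤ))]
    ring
  rw [step1]
  simp_rw [step2]
  -- Step 3: group by cardinality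
  rw [Finset.sum_powerset]
  have step3 : ∀ l : ℕ,
      ∑ S ∈ Finset.powersetCard l (univ : Finset (Fin n)),
          ((-1 : ℤ)^S.card *
            (if S.card ≤ minOver hL k
              then ∏ j, ((n - S.card).choose (k j - S.card) : ℤ) else 0))
        = (n.choose l : ℤ) * ((-1 : ℤ)^l *
            (if l ≤ minOver hL k
              then ∏ j, ((n - l).choose (k j - l) : ℤ) else 0)) := by
    intro l
    have hcongr :
      ∑ S ∈ Finset.powersetCard l (univ : Finset (Fin n)),
          ((-1 : ℤ)^S.card *
            (if S.card ≤ minOver hL k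
              then ∏ j, ((n - S.card).choose (k j - S.card) : ℤ) else 0))
        = ∑ _S ∈ Finset.powersetCard l (univ : Finset (Fin n)),
          ((-1 : ℤ)^l *
            (if l ≤ minOver hL k
              then ∏ j, ((n - l).choose (k j - l) : ℤ) else 0)) :=
      Finset.sum_congr rfl fun S hS => by rw [(Finset.mem_powersetCard.1 hS).2]
    rw [hcongr, Finset.sum_const,
      Finset.card_powersetCard, Finset.card_univ, Fintype.card_fin, nsmul_eq_mul]
  simp_rw [step3, Finset.card_univ, Fintype.card_fin]
  calc ∑ l ∈ Finset.range (n + 1), (n.choose l : ℤ) * ((-1 : ℤ)^l *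
          (if l ≤ minOver hL k
            then ∏ j, ((n - l).choose (k j - l) : ℤ) else 0))
      = ∑ l ∈ Finset.range (n + 1), (if l ≤ minOver hL k
          then (-1 : ℤ)^l * (n.choose l : ℤ) * ∏ j, ((n - l).choose (k j - l) : ℤ)
          else 0) := by
        refine Finset.sum_congr rfl fun l _ => ?_
        split <;> ring
    _ = ∑ l ∈ (Finset.range (n + 1)).filter (fun l => l ≤ minOver hL k),
          (-1 : ℤ)^l * (n.choose l : ℤ) * ∏ j, ((n - l).choose (k j - l) : ℤ) := by
        rw [Finset.sum_filter]
    _ = ∑ l ∈ Finset.range (minOver hL k + 1),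
          (-1 : ℤ)^l * (n.choose l : ℤ) * ∏ j, ((n - l).choose (k j - l) : ℤ) := by
        have hrange : (Finset.range (n + 1)).filter (fun l => l ≤ minOver hL k)
            = Finset.range (minOver hL k + 1) := by
          apply Finset.ext
          intro x
          rw [Finset.mem_filter, Finset.mem_range, Finset.mem_range]
          constructor
          · rintro ⟨-, h2⟩
            exact Nat.lt_succ_of_le h2
          · intro h
            have hx := Nat.lt_succ_iff.1 h
            exact ⟨Nat.lt_succ_of_le (hx.trans hmin_n), hx⟩
        rw [hrange]
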